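/- arXiv:1503.02603 — 3 statements merged into one kernel-verified Lean document; each statement's English description precedes it below -/
import Mathlib

section
/- The function h̄ is strictly increasing on [0, 𝐱]: if 0 ≤ w₁ < w₂ ≤ 𝐱 then h̄(w₁) < h̄(w₂). -/
/-- h̄ is strictly increasing on [0, 𝐱]. -/
theorem hbar_strictMono (I : ℕ) (hI : 1 ≤ I) (h θ : Fin I → ℝ)
    (hh : ∀ i, 0 < h i) (hθ : ∀ i, 0 < θ i) (b : ℝ) (hb : 0 < b)
    (m : Fin I) (hm : ∀ i, θ i ≤ θ m) :
    ∀ w₁ w₂ : ℝ, 0 ≤ w₁ → w₁ < w₂ → w₂ ≤ b * θ m →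
      sInf ((fun ξ => ∑ i, h i * ξ i) ''
          {ξ : Fin I → ℝ | ((∀ i, 0 ≤ ξ i) ∧ ∑ i, ξ i ≤ b) ∧ ∑ i, θ i * ξ i = w₁}) <
      sInf ((fun ξ => ∑ i, h i * ξ i) ''
          {ξ : Fin I → ℝ | ((∀ i, 0 ≤ ξ i) ∧ ∑ i, ξ i ≤ b) ∧ ∑ i, θ i * ξ i = w₂}) := by
  intro w₁ w₂ hw₁ hlt hw₂b
  haveI : Nonempty (Fin I) := ⟨⟨0, hI⟩⟩
  have hθm : 0 < θ m := hθ m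
  have hw₂ : 0 < w₂ := lt_of_le_of_lt hw₁ hlt
  -- notation
  set F : (Fin I → ℝ) → ℝ := fun ξ => ∑ i, h i * ξ i with hF
  set S : ℝ → Set ℝ := fun w => F ''
      {ξ : Fin I → ℝ | ((∀ i, 0 ≤ ξ i) ∧ ∑ i, ξ i ≤ b) ∧ ∑ i, θ i * ξ i = w} with hSdef
  show sInf (S w₁) < sInf (S w₂)
  -- feasibility
  have feas : ∀ w : ℝ, 0 ≤ w → w ≤ b * θ m → (S w).Nonempty := by
    intro w hw0 hwb
    refine ⟨F (fun i => if i = m then w / θ m else 0),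
      ⟨fun i => if i = m then w / θ m else 0, ⟨⟨?_, ?_⟩, ?_⟩, rfl⟩⟩
    · intro i; dsimp only; split
      · exact div_nonneg hw0 hθm.le
      · exact le_rfl
    · simp only [Finset.sum_ite_eq', Finset.mem_univ, if_true]
      exact (div_le_iff₀ hθm).mpr hwb
    · simp only [mul_ite, mul_zero, Finset.sum_ite_eq', Finset.mem_univ, if_true]
      field_simp
  have hSw₁ : (S w₁).Nonempty := feas w₁ hw₁ (le_trans hlt.le hw₂b)
  have hSw₂ : (S w₂).Nonempty := feas w₂ hw₂.le hw₂b
  -- uniform positive lower bound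
  set c : ℝ := Finset.univ.inf' Finset.univ_nonempty (fun i => h i / θ i) with hc
  have hcpos : 0 < c := by
    rw [hc, Finset.lt_inf'_iff]
    exact fun i _ => div_pos (hh i) (hθ i)
  have hci : ∀ i, c * θ i ≤ h i := by
    intro i
    have := Finset.inf'_le (fun i => h i / θ i) (Finset.mem_univ i)
    exact (le_div_iff₀ (hθ i)).mp this
  have lower : ∀ w : ℝ, ∀ x ∈ S w, c * w ≤ x := by
    rintro w x ⟨ξ, ⟨⟨hpos, _⟩, hθξ⟩, rfl⟩
    calc c * w = ∑ i, c * (θ i * ξ i) := by rw [← Finset.mul_sum, hθξ]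
      _ ≤ ∑ i, h i * ξ i := by
          refine Finset.sum_le_sum fun i _ => ?_
          rw [← mul_assoc]
          exact mul_le_mul_of_nonneg_right (hci i) (hpos i)
  have bdd : ∀ w : ℝ, BddBelow (S w) := fun w => ⟨c * w, fun x hx => lower w x hx⟩
  have hB : c * w₂ ≤ sInf (S w₂) := le_csInf hSw₂ (lower w₂)
  have hBpos : 0 < sInf (S w₂) := lt_of_lt_of_le (by positivity) hB
  -- scaling: sInf (S w₁) ≤ (w₁/w₂) * x for all x ∈ S w₂
  have key : ∀ x ∈ S w₂, sInf (S w₁) ≤ (w₁ / w₂) * x := by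
    rintro x ⟨ξ, ⟨⟨hpos, hsum⟩, hθξ⟩, rfl⟩
    have hr0 : 0 ≤ w₁ / w₂ := div_nonneg hw₁ hw₂.le
    have hr1 : w₁ / w₂ ≤ 1 := (div_le_one hw₂).mpr hlt.le
    refine csInf_le (bdd w₁) ⟨fun i => (w₁ / w₂) * ξ i, ⟨⟨?_, ?_⟩, ?_⟩, ?_⟩
    · exact fun i => mul_nonneg hr0 (hpos i)
    · rw [← Finset.mul_sum]
      calc (w₁ / w₂) * ∑ i, ξ i ≤ 1 * ∑ i, ξ i :=
            mul_le_mul_of_nonneg_right hr1 (Finset.sum_nonneg fun i _ => hpos i)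
        _ = ∑ i, ξ i := one_mul _
        _ ≤ b := hsum
    · have : ∑ i, θ i * ((w₁ / w₂) * ξ i) = (w₁ / w₂) * ∑ i, θ i * ξ i := by
        rw [Finset.mul_sum]; exact Finset.sum_congr rfl fun i _ => by ring
      rw [this, hθξ]; field_simp
    · show (∑ i, h i * ((w₁ / w₂) * ξ i)) = (w₁ / w₂) * ∑ i, h i * ξ i
      rw [Finset.mul_sum]; exact Finset.sum_congr rfl fun i _ => by ring
  rcases eq_or_lt_of_le hw₁ with h0 | hw₁pos
  · -- w₁ = 0
    obtain ⟨x, hx⟩ := hSw₂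
    have := key x hx
    rw [← h0, zero_div, zero_mul] at this
    rw [← h0]
    exact lt_of_le_of_lt this hBpos
  · -- 0 < w₁
    have ht : 0 < w₁ / w₂ := div_pos hw₁pos hw₂
    have ht1 : w₁ / w₂ < 1 := (div_lt_one hw₂).mpr hlt
    have h1 : sInf (S w₁) / (w₁ / w₂) ≤ sInf (S w₂) := by
      refine le_csInf hSw₂ fun x hx => ?_
      rw [div_le_iff₀ ht]
      calc sInf (S w₁) ≤ (w₁ / w₂) * x := key x hx
        _ = x * (w₁ / w₂) := by ring
    calc sInf (S w₁) = (sInf (S w₁) / (w₁ / w₂)) * (w₁ / w₂) := by field_simp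
      _ ≤ sInf (S w₂) * (w₁ / w₂) := mul_le_mul_of_nonneg_right h1 ht.le
      _ < sInf (S w₂) * 1 := by
          exact mul_lt_mul_of_pos_left ht1 hBpos
      _ = sInf (S w₂) := mul_one _
end

section
/- Uniqueness of the two-class representation: suppose 0 < θ₁ < θ₂ < ⋯ < θ_J and a > 0. For every w ∈ [0, θ_J a) there exists a unique triple (j, χ_l, χ_h) with j ∈ {1,…,J}, χ_l, χ_h ≥ 0, χ_l + χ_h ∈ [0, a), and w = θ_{j-1}χ_l + θ_jχ_h (with θ₀ := 0 and the convention χ_l = 0 when j = 1). -/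
/-- Uniqueness of the two-class representation w = θ_{j-1}χ_l + θ_jχ_h
(with θ₀ = 0, χ_l = 0 when j = 1, full buffer χ_l + χ_h = a when j ≥ 2). -/
theorem two_class_representation_unique (J : ℕ) (hJ : 1 ≤ J) (θ : ℕ → ℝ)
    (hθ0 : θ 0 = 0) (hθmono : ∀ i < J, θ i < θ (i + 1))
    (a : ℝ) (ha : 0 < a) (w : ℝ) (hw0 : 0 ≤ w) (hwx : w < θ J * a) :
    ∃! t : ℕ × ℝ × ℝ,
      (1 ≤ t.1 ∧ t.1 ≤ J) ∧ 0 ≤ t.2.1 ∧ 0 ≤ t.2.2 ∧ t.2.2 < a ∧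
      t.2.1 + t.2.2 ≤ a ∧
      w = θ (t.1 - 1) * t.2.1 + θ t.1 * t.2.2 ∧
      (t.1 = 1 → t.2.1 = 0) ∧ (2 ≤ t.1 → t.2.1 + t.2.2 = a) := by
  classical
  have mono : ∀ i k, i < k → k ≤ J → θ i < θ k := by
    intro i k hik hkJ
    induction k with
    | zero => omega
    | succ n ih =>
      rcases Nat.lt_succ_iff_lt_or_eq.mp hik with h | h
      · exact lt_trans (ih h (by omega)) (hθmono n (by omega))
      · subst h; exact hθmono i (by omega)
  have mono' : ∀ i k, i ≤ k → k ≤ J → θ i ≤ θ k := by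
    intro i k hik hkJ
    rcases lt_or_eq_of_le hik with h | h
    · exact le_of_lt (mono i k h hkJ)
    · subst h; rfl
  have hP : ∃ n, w < θ n * a := ⟨J, hwx⟩
  set j := Nat.find hP with hjdef
  have hj1 : w < θ j * a := Nat.find_spec hP
  have hjJ : j ≤ J := Nat.find_min' hP hwx
  have hjpos : 1 ≤ j := by
    by_contra hcon
    have hj0 : j = 0 := by omega
    have := hj1
    rw [hj0, hθ0] at this
    linarith
  have hj2 : θ (j - 1) * a ≤ w := by
    have := Nat.find_min hP (show j - 1 < j by omega)
    push_neg at this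
    exact this
  have hd : 0 < θ j - θ (j - 1) := by
    have := mono (j - 1) j (by omega) hjJ
    linarith
  set χh : ℝ := (w - θ (j - 1) * a) / (θ j - θ (j - 1)) with hχh
  set χl : ℝ := if j = 1 then 0 else a - χh with hχl
  have hkey : (θ j - θ (j - 1)) * χh = w - θ (j - 1) * a := by
    rw [hχh, mul_div_cancel₀ _ (ne_of_gt hd)]
  have hχh0 : 0 ≤ χh := div_nonneg (by linarith) (le_of_lt hd)
  have hχha : χh < a := by
    rw [hχh, div_lt_iff₀ hd]
    nlinarith
  have hχl0 : 0 ≤ χl := by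
    rw [hχl]
    split
    · exact le_rfl
    · linarith
  have hχlsum : χl + χh ≤ a := by
    rw [hχl]
    split
    · linarith
    · linarith
  have heqw : w = θ (j - 1) * χl + θ j * χh := by
    rw [hχl]
    split
    · rename_i h1
      have h0 : θ (j - 1) = 0 := by rw [h1]; simpa using hθ0
      rw [h0] at hkey ⊢
      nlinarith [hkey]
    · nlinarith [hkey]
  refine ⟨(j, χl, χh), ⟨⟨hjpos, hjJ⟩, hχl0, hχh0, hχha, hχlsum, heqw, ?_, ?_⟩, ?_⟩
  · intro h1; rw [hχl, if_pos h1]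
  · intro h2
    have : j ≠ 1 := by omega
    rw [hχl, if_neg this]; ring
  · rintro ⟨k, l, h⟩ ⟨⟨hk1, hkJ⟩, hl0, hh0, hha, hlha, heq, hk1', hk2'⟩
    simp only at hk1 hkJ hl0 hh0 hha hlha heq hk1' hk2'
    simp only [Prod.mk.injEq]
    rcases Nat.lt_or_ge k 2 with hk | hk
    · -- case k = 1
      have hkeq : k = 1 := by omega
      have hl : l = 0 := hk1' hkeq
      rw [hkeq, hl] at heq
      simp [hθ0] at heq
      have hθ1 : 0 < θ 1 := by have := mono 0 1 (by omega) hJ; linarith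
      have hhigh : w < θ 1 * a := by rw [heq]; nlinarith
      have hj1' : j = 1 := by
        have := Nat.find_min' hP hhigh
        omega
      have hkey1 : θ 1 * χh = w := by
        have h5 := hkey
        rw [hj1'] at h5
        simp only [show (1:ℕ) - 1 = 0 from rfl, hθ0, sub_zero, zero_mul] at h5
        linarith
      have hh : h = χh := by
        have h6 : θ 1 * h = θ 1 * χh := by rw [hkey1, ← heq]
        exact mul_left_cancel₀ (ne_of_gt hθ1) h6
      refine ⟨by omega, ?_, hh⟩
      rw [hl, hχl, if_pos hj1']
    · -- case k ≥ 2
      have hl : l = a - h := by have := hk2' hk; linarith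
      have hdk : 0 < θ k - θ (k - 1) := by
        have := mono (k - 1) k (by omega) hkJ; linarith
      rw [hl] at heq
      have hlow : θ (k - 1) * a ≤ w := by
        nlinarith [mul_nonneg hdk.le hh0]
      have hhigh : w < θ k * a := by
        nlinarith [mul_pos hdk (show (0:ℝ) < a - h by linarith)]
      have hjk : j ≤ k := Nat.find_min' hP hhigh
      have hkj : k = j := by
        by_contra hne
        have h1 : θ j ≤ θ (k - 1) := mono' j (k - 1) (by omega) (by omega)
        have h2 := mul_le_mul_of_nonneg_right h1 ha.le
        linarith
      have hh : h = χh := by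
        have h2 : (θ k - θ (k - 1)) * h = w - θ (k - 1) * a := by
          linear_combination -heq
        rw [hkj] at h2
        have h3 : (θ j - θ (j - 1)) * h = (θ j - θ (j - 1)) * χh := by
          rw [hkey]; exact h2
        exact mul_left_cancel₀ (ne_of_gt hd) h3
      have hjne : ¬ j = 1 := by omega
      exact ⟨hkj, by rw [hl, hh, hχl, if_neg hjne], hh⟩
end

section
/- For the one-dimensional Skorohod problem on [0, κ] (κ > 0): given continuous ψ with ψ(0) ∈ [0,κ], if (φ, η₁, η₂) and (φ', η₁', η₂') both satisfy φ = ψ + η₁ - η₂ ∈ [0,κ], with η₁, η₂ nondecreasing, starting at 0, η₁ increasing only when φ = 0 and η₂ increasing only when φ = κ (and similarly for the primed triple), then φ = φ', η₁ = η₁', η₂ = η₂'. -/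
open Set Filter Topology

/-- If a continuous function on `[0,t]` starts at `0` and is positive at `t`, there is a
last zero `s` before `t`, with `f` positive on `(s,t]`. -/
lemma skorohod_aux_sup {t : ℝ} (f : ℝ → ℝ) (hf : ContinuousOn f (Set.Icc 0 t))
    (h0 : f 0 = 0) (hpos : 0 < f t) (ht : 0 ≤ t) :
    ∃ s ∈ Set.Ico (0:ℝ) t, f s = 0 ∧ ∀ u ∈ Set.Ioc s t, 0 < f u := by
  set S : Set ℝ := Set.Icc 0 t ∩ {u | f u ≤ 0} with hS
  have h0S : (0:ℝ) ∈ S := ⟨⟨le_refl 0, ht⟩, by simp [h0]⟩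
  have hbdd : BddAbove S := ⟨t, fun x hx => hx.1.2⟩
  have hclosed : IsClosed S :=
    hf.preimage_isClosed_of_isClosed isClosed_Icc isClosed_Iic
  set s := sSup S with hsdef
  have hsS : s ∈ S := hclosed.csSup_mem ⟨0, h0S⟩ hbdd
  have hs0 : 0 ≤ s := hsS.1.1
  have hst : s ≤ t := hsS.1.2
  have hgt : ∀ u ∈ Set.Ioc s t, 0 < f u := by
    intro u hu
    by_contra hle
    push_neg at hle
    have : u ∈ S := ⟨⟨hs0.trans hu.1.le, hu.2⟩, hle⟩
    exact absurd (le_csSup hbdd this) (not_le.mpr hu.1)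
  have hslt : s < t := lt_of_le_of_ne hst (fun h => by
    rw [h] at hsS; exact absurd hsS.2 (not_le.mpr hpos))
  refine ⟨s, ⟨hs0, hslt⟩, ?_, hgt⟩
  refine le_antisymm hsS.2 ?_
  have hsub : Set.Ioc s t ⊆ Set.Icc 0 t := fun u hu => ⟨hs0.trans hu.1.le, hu.2⟩
  have hct : Filter.Tendsto f (𝓝[Set.Ioc s t] s) (𝓝 (f s)) :=
    (hf s ⟨hs0, hst⟩).mono hsub
  have hne : (𝓝[Set.Ioc s t] s).NeBot := by
    rw [nhdsWithin_Ioc_eq_nhdsGT hslt]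
    infer_instance
  exact ge_of_tendsto hct (eventually_mem_nhdsWithin.mono fun u hu => (hgt u hu).le)

/-- An eventual property within `[s,t]` near `s` holds on a nondegenerate interval `[s,m]`. -/
lemma skorohod_aux_interval {s t : ℝ} (hst : s < t) {P : ℝ → Prop}
    (h : ∀ᶠ u in 𝓝[Set.Icc s t] s, P u) :
    ∃ m ∈ Set.Ioc s t, ∀ u ∈ Set.Icc s m, P u := by
  obtain ⟨U, hUo, hsU, hsub⟩ := mem_nhdsWithin.mp h
  
  obtain ⟨ε, hε, hball⟩ := Metric.isOpen_iff.mp hUo s hsU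
  refine ⟨min (s + ε / 2) t, ⟨lt_min (by linarith) hst, min_le_right _ _⟩, ?_⟩
  intro u hu
  have hu2 : u ≤ s + ε / 2 := hu.2.trans (min_le_left _ _)
  have hut : u ≤ t := hu.2.trans (min_le_right _ _)
  refine hsub ⟨hball ?_, hu.1, hut⟩
  rw [Metric.mem_ball, Real.dist_eq, abs_lt]
  constructor <;> [linarith [hu.1]; linarith]

/-- One-sided comparison of the reflected paths. -/
lemma skorohod_phi_le (κ : ℝ) (ψ φ φ' η₁ η₂ η₁' η₂' : ℝ → ℝ)
    (hφ : ∀ t ≥ (0:ℝ), φ t = ψ t + η₁ t - η₂ t)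
    (hφrange : ∀ t ≥ (0:ℝ), φ t ∈ Set.Icc 0 κ)
    (hη₁c : ContinuousOn η₁ (Set.Ici 0)) (hη₂c : ContinuousOn η₂ (Set.Ici 0))
    (hη₂m : MonotoneOn η₂ (Set.Ici 0))
    (hη₁0 : η₁ 0 = 0) (hη₂0 : η₂ 0 = 0)
    (hη₁supp : ∀ s t : ℝ, 0 ≤ s → s ≤ t → (∀ u ∈ Set.Icc s t, 0 < φ u) → η₁ s = η₁ t)
    (hφ' : ∀ t ≥ (0:ℝ), φ' t = ψ t + η₁' t - η₂' t)
    (hφ'range : ∀ t ≥ (0:ℝ), φ' t ∈ Set.Icc 0 κ)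
    (hη₁'c : ContinuousOn η₁' (Set.Ici 0)) (hη₂'c : ContinuousOn η₂' (Set.Ici 0))
    (hη₁'m : MonotoneOn η₁' (Set.Ici 0))
    (hη₁'0 : η₁' 0 = 0) (hη₂'0 : η₂' 0 = 0)
    (hη₂'supp : ∀ s t : ℝ, 0 ≤ s → s ≤ t → (∀ u ∈ Set.Icc s t, φ' u < κ) → η₂' s = η₂' t)
    (t : ℝ) (ht : 0 ≤ t) : φ t ≤ φ' t := by
  by_contra hcon
  push_neg at hcon
  set f : ℝ → ℝ := fun u => φ u - φ' u with hfdef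
  have hIcc : Set.Icc (0:ℝ) t ⊆ Set.Ici 0 := fun u hu => hu.1
  have hfg : ∀ u ∈ Set.Icc (0:ℝ) t, f u = (η₁ u - η₂ u) - (η₁' u - η₂' u) := by
    intro u hu
    simp only [hfdef, hφ u hu.1, hφ' u hu.1]; ring
  have hfc : ContinuousOn f (Set.Icc 0 t) := by
    have : ContinuousOn (fun u => (η₁ u - η₂ u) - (η₁' u - η₂' u)) (Set.Icc 0 t) :=
      (((hη₁c.mono hIcc).sub (hη₂c.mono hIcc)).sub
        ((hη₁'c.mono hIcc).sub (hη₂'c.mono hIcc)))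
    exact this.congr hfg
  have hf0 : f 0 = 0 := by
    have := hfg 0 ⟨le_refl 0, ht⟩
    rw [this, hη₁0, hη₂0, hη₁'0, hη₂'0]; ring
  have hft : 0 < f t := by simp only [hfdef]; linarith
  obtain ⟨s, hsmem, hfs, hgt⟩ := skorohod_aux_sup f hfc hf0 hft ht
  have hkey : ∀ v ∈ Set.Ioc s t, f t ≤ f v := by
    intro v hv
    have hv0 : 0 ≤ v := hsmem.1.trans hv.1.le
    have hsubIoc : Set.Icc v t ⊆ Set.Ioc s t := fun u hu => ⟨hv.1.trans_le hu.1, hu.2⟩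
    have hφpos : ∀ u ∈ Set.Icc v t, 0 < φ u := by
      intro u hu
      have h1 := hgt u (hsubIoc hu)
      have h2 := (hφ'range u (hv0.trans hu.1)).1
      simp only [hfdef] at h1; linarith
    have hφ'lt : ∀ u ∈ Set.Icc v t, φ' u < κ := by
      intro u hu
      have h1 := hgt u (hsubIoc hu)
      have h2 := (hφrange u (hv0.trans hu.1)).2
      simp only [hfdef] at h1; linarith
    have h1 : η₁ v = η₁ t := hη₁supp v t hv0 hv.2 hφpos
    have h2 : η₂' v = η₂' t := hη₂'supp v t hv0 hv.2 hφ'lt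
    have h3 : η₂ v ≤ η₂ t := hη₂m hv0 ht hv.2
    have h4 : η₁' v ≤ η₁' t := hη₁'m hv0 ht hv.2
    have e1 := hfg v ⟨hv0, hv.2⟩
    have e2 := hfg t ⟨ht, le_refl t⟩
    rw [e1, e2]; linarith
  -- take limit v → s⁺
  have hsub : Set.Ioc s t ⊆ Set.Icc 0 t := fun u hu => ⟨hsmem.1.trans hu.1.le, hu.2⟩
  have hct : Filter.Tendsto f (𝓝[Set.Ioc s t] s) (𝓝 (f s)) :=
    (hfc s ⟨hsmem.1, hsmem.2.le⟩).mono hsub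
  have hne : (𝓝[Set.Ioc s t] s).NeBot := by
    rw [nhdsWithin_Ioc_eq_nhdsGT hsmem.2]
    infer_instance
  have : f t ≤ f s :=
    ge_of_tendsto hct (eventually_mem_nhdsWithin.mono fun u hu => hkey u hu)
  rw [hfs] at this
  linarith

/-- One-sided comparison of the regulators, given equality of the reflected paths. -/
lemma skorohod_eta_le (κ : ℝ) (hκ : 0 < κ) (ψ φ φ' η₁ η₂ η₁' η₂' : ℝ → ℝ)
    (hψc : ContinuousOn ψ (Set.Ici 0))
    (hφ : ∀ t ≥ (0:ℝ), φ t = ψ t + η₁ t - η₂ t)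
    (hφrange : ∀ t ≥ (0:ℝ), φ t ∈ Set.Icc 0 κ)
    (hη₁c : ContinuousOn η₁ (Set.Ici 0)) (hη₂c : ContinuousOn η₂ (Set.Ici 0))
    (hη₁0 : η₁ 0 = 0) (hη₂0 : η₂ 0 = 0)
    (hη₁supp : ∀ s t : ℝ, 0 ≤ s → s ≤ t → (∀ u ∈ Set.Icc s t, 0 < φ u) → η₁ s = η₁ t)
    (hη₂supp : ∀ s t : ℝ, 0 ≤ s → s ≤ t → (∀ u ∈ Set.Icc s t, φ u < κ) → η₂ s = η₂ t)
    (hφ' : ∀ t ≥ (0:ℝ), φ' t = ψ t + η₁' t - η₂' t)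
    (hη₁'c : ContinuousOn η₁' (Set.Ici 0))
    (hη₁'0 : η₁' 0 = 0) (hη₂'0 : η₂' 0 = 0)
    (hη₁'supp : ∀ s t : ℝ, 0 ≤ s → s ≤ t → (∀ u ∈ Set.Icc s t, 0 < φ' u) → η₁' s = η₁' t)
    (hη₂'supp : ∀ s t : ℝ, 0 ≤ s → s ≤ t → (∀ u ∈ Set.Icc s t, φ' u < κ) → η₂' s = η₂' t)
    (hphieq : ∀ u ≥ (0:ℝ), φ u = φ' u)
    (t : ℝ) (ht : 0 ≤ t) : η₁ t ≤ η₁' t := by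
  by_contra hcon
  push_neg at hcon
  set g : ℝ → ℝ := fun u => η₁ u - η₁' u with hgdef
  -- g = η₂ - η₂' as well
  have hg2 : ∀ u ≥ (0:ℝ), g u = η₂ u - η₂' u := by
    intro u hu
    have e1 := hφ u hu
    have e2 := hφ' u hu
    have e3 := hphieq u hu
    simp only [hgdef]; linarith
  have hIcc : Set.Icc (0:ℝ) t ⊆ Set.Ici 0 := fun u hu => hu.1
  have hgc : ContinuousOn g (Set.Icc 0 t) :=
    (hη₁c.mono hIcc).sub (hη₁'c.mono hIcc)
  have hg0 : g 0 = 0 := by simp only [hgdef, hη₁0, hη₁'0]; ring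
  have hgt0 : 0 < g t := by simp only [hgdef]; linarith
  obtain ⟨s, hsmem, hgs, hgt⟩ := skorohod_aux_sup g hgc hg0 hgt0 ht
  have hs0 : 0 ≤ s := hsmem.1
  have hslt : s < t := hsmem.2
  -- φ is continuous on [0,t]
  have hφc : ContinuousOn φ (Set.Icc 0 t) := by
    have hc : ContinuousOn (fun u => ψ u + η₁ u - η₂ u) (Set.Icc 0 t) :=
      ((hψc.mono hIcc).add (hη₁c.mono hIcc)).sub (hη₂c.mono hIcc)
    exact hc.congr fun u hu => hφ u hu.1
  have hφcw : Filter.Tendsto φ (𝓝[Set.Icc s t] s) (𝓝 (φ s)) :=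
    (hφc s ⟨hs0, hslt.le⟩).mono (fun u hu => ⟨hs0.trans hu.1, hu.2⟩)
  have hconst : ∃ m ∈ Set.Ioc s t, g m = g s := by
    by_cases hcase : 0 < φ s
    · -- φ > 0 near s, so η₁ and η₁' are constant there
      have hev : ∀ᶠ u in 𝓝[Set.Icc s t] s, 0 < φ u := hφcw (Ioi_mem_nhds hcase)
      obtain ⟨m, hm, hPm⟩ := skorohod_aux_interval hslt hev
      have h1 : η₁ s = η₁ m := hη₁supp s m hs0 hm.1.le hPm
      have h2 : η₁' s = η₁' m := hη₁'supp s m hs0 hm.1.le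
        (fun u hu => by rw [← hphieq u (hs0.trans hu.1)]; exact hPm u hu)
      exact ⟨m, hm, by simp only [hgdef]; rw [← h1, ← h2]⟩
    · -- φ s = 0 < κ, so φ < κ near s, η₂ and η₂' constant there
      push_neg at hcase
      have hlt : φ s < κ := lt_of_le_of_lt hcase hκ
      have hev : ∀ᶠ u in 𝓝[Set.Icc s t] s, φ u < κ := hφcw (Iio_mem_nhds hlt)
      obtain ⟨m, hm, hPm⟩ := skorohod_aux_interval hslt hev
      have h1 : η₂ s = η₂ m := hη₂supp s m hs0 hm.1.le hPm
      have h2 : η₂' s = η₂' m := hη₂'supp s m hs0 hm.1.le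
        (fun u hu => by rw [← hphieq u (hs0.trans hu.1)]; exact hPm u hu)
      refine ⟨m, hm, ?_⟩
      rw [hg2 m (hs0.trans hm.1.le), hg2 s hs0, ← h1, ← h2]
  obtain ⟨m, hm, hgm⟩ := hconst
  have := hgt m hm
  rw [hgm, hgs] at this
  exact lt_irrefl 0 this

/-- Uniqueness of solutions to the one-dimensional Skorohod problem on [0, κ]. -/
theorem skorohod_unique (κ : ℝ) (hκ : 0 < κ) (ψ φ φ' η₁ η₂ η₁' η₂' : ℝ → ℝ)
    (hψc : ContinuousOn ψ (Set.Ici 0)) (hψ0 : ψ 0 ∈ Set.Icc 0 κ)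
    -- first solution
    (hφ : ∀ t ≥ (0:ℝ), φ t = ψ t + η₁ t - η₂ t)
    (hφrange : ∀ t ≥ (0:ℝ), φ t ∈ Set.Icc 0 κ)
    (hη₁c : ContinuousOn η₁ (Set.Ici 0)) (hη₂c : ContinuousOn η₂ (Set.Ici 0))
    (hη₁m : MonotoneOn η₁ (Set.Ici 0)) (hη₂m : MonotoneOn η₂ (Set.Ici 0))
    (hη₁0 : η₁ 0 = 0) (hη₂0 : η₂ 0 = 0)
    (hη₁supp : ∀ s t : ℝ, 0 ≤ s → s ≤ t → (∀ u ∈ Set.Icc s t, 0 < φ u) → η₁ s = η₁ t)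
    (hη₂supp : ∀ s t : ℝ, 0 ≤ s → s ≤ t → (∀ u ∈ Set.Icc s t, φ u < κ) → η₂ s = η₂ t)
    -- second solution
    (hφ' : ∀ t ≥ (0:ℝ), φ' t = ψ t + η₁' t - η₂' t)
    (hφ'range : ∀ t ≥ (0:ℝ), φ' t ∈ Set.Icc 0 κ)
    (hη₁'c : ContinuousOn η₁' (Set.Ici 0)) (hη₂'c : ContinuousOn η₂' (Set.Ici 0))
    (hη₁'m : MonotoneOn η₁' (Set.Ici 0)) (hη₂'m : MonotoneOn η₂' (Set.Ici 0))
    (hη₁'0 : η₁' 0 = 0) (hη₂'0 : η₂' 0 = 0)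
    (hη₁'supp : ∀ s t : ℝ, 0 ≤ s → s ≤ t → (∀ u ∈ Set.Icc s t, 0 < φ' u) → η₁' s = η₁' t)
    (hη₂'supp : ∀ s t : ℝ, 0 ≤ s → s ≤ t → (∀ u ∈ Set.Icc s t, φ' u < κ) → η₂' s = η₂' t) :
    ∀ t ≥ (0:ℝ), φ t = φ' t ∧ η₁ t = η₁' t ∧ η₂ t = η₂' t := by
  have hphieq : ∀ u ≥ (0:ℝ), φ u = φ' u := by
    intro u hu
    refine le_antisymm
      (skorohod_phi_le κ ψ φ φ' η₁ η₂ η₁' η₂' hφ hφrange hη₁c hη₂c hη₂m hη₁0 hη₂0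
        hη₁supp hφ' hφ'range hη₁'c hη₂'c hη₁'m hη₁'0 hη₂'0 hη₂'supp u hu)
      (skorohod_phi_le κ ψ φ' φ η₁' η₂' η₁ η₂ hφ' hφ'range hη₁'c hη₂'c hη₂'m hη₁'0 hη₂'0
        hη₁'supp hφ hφrange hη₁c hη₂c hη₁m hη₁0 hη₂0 hη₂supp u hu)
  intro t ht
  have hphieq' : ∀ u ≥ (0:ℝ), φ' u = φ u := fun u hu => (hphieq u hu).symm
  have heta1 : η₁ t = η₁' t :=
    le_antisymm
      (skorohod_eta_le κ hκ ψ φ φ' η₁ η₂ η₁' η₂' hψc hφ hφrange hη₁c hη₂c hη₁0 hη₂0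
        hη₁supp hη₂supp hφ' hη₁'c hη₁'0 hη₂'0 hη₁'supp hη₂'supp hphieq t ht)
      (skorohod_eta_le κ hκ ψ φ' φ η₁' η₂' η₁ η₂ hψc hφ' hφ'range hη₁'c hη₂'c hη₁'0 hη₂'0
        hη₁'supp hη₂'supp hφ hη₁c hη₁0 hη₂0 hη₁supp hη₂supp hphieq' t ht)
  have heta2 : η₂ t = η₂' t := by
    have e1 := hφ t ht
    have e2 := hφ' t ht
    have e3 := hphieq t ht
    linarith
  exact ⟨hphieq t ht, heta1, heta2⟩
end
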